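/- Let H be a countable abelian group and σ : H∖{0} → ℝ a summable symmetric function (σ(−κ)=σ(κ)) such that ∑_{κ≠0} (1 − Re θ(κ))·σ(κ) = 0 for every character θ of H. Then σ = 0. -/

import Mathlib

open MeasureTheory Complex

namespace Stmt18Aux



variable {H : Type*} [AddCommGroup H]

noncomputable instance : TopologicalSpace (AddChar H Circle) :=
  TopologicalSpace.induced (fun θ => (θ : H → Circle)) inferInstance

lemma continuous_eval (κ : H) : Continuous fun θ : AddChar H Circle => θ κ :=
  (continuous_apply κ).comp continuous_induced_dom

lemma isClosedEmbedding_coe :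
    Topology.IsClosedEmbedding (fun θ : AddChar H Circle => (θ : H → Circle)) := by
  refine ⟨⟨⟨rfl⟩, DFunLike.coe_injective⟩, ?_⟩
  have hr : Set.range (fun θ : AddChar H Circle => (θ : H → Circle)) =
      {f : H → Circle | f 0 = 1} ∩ ⋂ (a : H) (b : H), {f | f (a + b) = f a * f b} := by
    ext f
    simp only [Set.mem_inter_iff, Set.mem_iInter, Set.mem_setOf_eq, Set.mem_range]
    constructor
    · rintro ⟨θ, rfl⟩; exact ⟨θ.map_zero_eq_one, θ.map_add_eq_mul⟩
    · rintro ⟨h1, h2⟩; exact ⟨⟨f, h1, h2⟩, rfl⟩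
  rw [hr]
  exact (isClosed_eq (continuous_apply 0) continuous_const).inter
    (isClosed_iInter fun a => isClosed_iInter fun b =>
      isClosed_eq (continuous_apply (a + b)) ((continuous_apply a).mul (continuous_apply b)))

instance : CompactSpace (AddChar H Circle) := isClosedEmbedding_coe.compactSpace
instance : T2Space (AddChar H Circle) := isClosedEmbedding_coe.toIsEmbedding.t2Space

instance : IsTopologicalGroup (AddChar H Circle) where
  continuous_mul := continuous_induced_rng.2 <| continuous_pi fun a =>
    ((continuous_eval a).comp continuous_fst).mul ((continuous_eval a).comp continuous_snd)
  continuous_inv := continuous_induced_rng.2 <| continuous_pi fun a => continuous_eval (-a)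

noncomputable instance : MeasurableSpace (AddChar H Circle) := borel _
instance : BorelSpace (AddChar H Circle) := ⟨rfl⟩
instance : Nonempty (AddChar H Circle) := ⟨1⟩

example : LocallyCompactSpace (AddChar H Circle) := inferInstance

noncomputable example : Measure (AddChar H Circle) := Measure.haar

example : (Measure.haar (G := AddChar H Circle)).IsMulLeftInvariant := inferInstance
example : IsFiniteMeasure (Measure.haar (G := AddChar H Circle)) := inferInstance
example : (Measure.haar (G := AddChar H Circle)).IsOpenPosMeasure := inferInstance


variable {H : Type*} [AddCommGroup H]

noncomputable def ratToRealCircle : AddCircle (1 : ℚ) →+ AddCircle (1 : ℝ) :=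
  QuotientAddGroup.lift _
    ((QuotientAddGroup.mk' (AddSubgroup.zmultiples (1 : ℝ))).comp
      (Rat.castHom ℝ).toAddMonoidHom)
    (by
      intro q hq
      rw [AddSubgroup.mem_zmultiples_iff] at hq
      obtain ⟨n, hn⟩ := hq
      have : ((q : ℝ)) ∈ AddSubgroup.zmultiples (1 : ℝ) := by
        rw [AddSubgroup.mem_zmultiples_iff]
        exact ⟨n, by rw [← hn]; push_cast [zsmul_eq_mul]; ring⟩
      simpa [QuotientAddGroup.eq_zero_iff] using this)

lemma ratToRealCircle_eq_zero {x : AddCircle (1 : ℚ)} (h : ratToRealCircle x = 0) : x = 0 := by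
  induction x using QuotientAddGroup.induction_on with
  | H q =>
    have : ((q : ℝ)) ∈ AddSubgroup.zmultiples (1 : ℝ) := by
      simpa [ratToRealCircle, QuotientAddGroup.eq_zero_iff] using h
    rw [AddSubgroup.mem_zmultiples_iff] at this
    obtain ⟨n, hn⟩ := this
    have hq : q = (n : ℚ) := by
      have : ((q : ℝ)) = ((n : ℚ) : ℝ) := by rw [← hn]; push_cast [zsmul_eq_mul]; ring
      exact_mod_cast this
    rw [QuotientAddGroup.eq_zero_iff, AddSubgroup.mem_zmultiples_iff]
    exact ⟨n, by rw [hq]; push_cast [zsmul_eq_mul]; ring⟩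

lemma exists_char {κ : H} (hκ : κ ≠ 0) : ∃ χ : AddChar H Circle, χ κ ≠ 1 := by
  obtain ⟨c, hc⟩ := CharacterModule.exists_character_apply_ne_zero_of_ne_zero hκ
  refine ⟨⟨fun a => AddCircle.toCircle (ratToRealCircle (c a)), by simp,
    fun a b => by
      show AddCircle.toCircle (ratToRealCircle (c (a+b))) = _ * _
      rw [map_add, map_add, AddCircle.toCircle_add]⟩, ?_⟩
  intro h
  apply hc
  apply ratToRealCircle_eq_zero
  have h1 : AddCircle.toCircle (ratToRealCircle (c κ)) = AddCircle.toCircle (0 : AddCircle (1:ℝ)) := by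
    simpa using h
  exact AddCircle.injective_toCircle one_ne_zero h1


noncomputable abbrev μH (H : Type*) [AddCommGroup H] : Measure (AddChar H Circle) := Measure.haar

lemma continuous_evalC (κ : H) : Continuous fun θ : AddChar H Circle => ((θ κ : Circle) : ℂ) :=
  continuous_subtype_val.comp (continuous_eval κ)

lemma J_eq_zero {κ : H} (hκ : κ ≠ 0) :
    ∫ θ : AddChar H Circle, ((θ κ : Circle) : ℂ) ∂(μH H) = 0 := by
  obtain ⟨χ, hχ⟩ := exists_char hκ
  have h1 := integral_mul_left_eq_self (μ := μH H) (fun θ : AddChar H Circle => ((θ κ : Circle) : ℂ)) χ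
  have h2 : ∀ θ : AddChar H Circle, (((χ * θ) κ : Circle) : ℂ) = (χ κ : ℂ) * ((θ κ : Circle) : ℂ) := by
    intro θ; rw [AddChar.mul_apply, Circle.coe_mul]
  simp only [h2] at h1
  rw [integral_const_mul] at h1
  have h3 : ((χ κ : ℂ) - 1) * ∫ θ : AddChar H Circle, ((θ κ : Circle) : ℂ) ∂(μH H) = 0 := by
    rw [sub_mul, one_mul, h1, sub_self]
  rcases mul_eq_zero.1 h3 with h | h
  · exact absurd (by rwa [sub_eq_zero, Circle.coe_eq_one] at h) hχ
  · exact h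

end Stmt18Aux

open Stmt18Aux in
/-- If a summable symmetric `σ` on `H \ {0}` (encoded by `σ 0 = 0`) satisfies
`∑_κ (1 - Re θ(κ)) σ(κ) = 0` for every character `θ` of `H`, then `σ = 0`. -/
theorem stmt18 {H : Type*} [AddCommGroup H] [Countable H]
    (σ : H → ℝ) (hσ0 : σ 0 = 0) (hsym : ∀ κ, σ (-κ) = σ κ) (hsum : Summable σ)
    (hvanish : ∀ θ : H → ℂ, θ 0 = 1 → (∀ a b, θ (a + b) = θ a * θ b) →
      (∀ a, ‖θ a‖ = 1) → ∑' κ, (1 - (θ κ).re) * σ κ = 0) :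
    ∀ κ, σ κ = 0 := by
  intro κ₀
  by_cases hκ₀ : κ₀ = 0
  · rw [hκ₀]; exact hσ0
  set T : ℝ := ∑' κ, σ κ with hT
  have habs := hsum.abs
  have hsRe : ∀ θ : AddChar H Circle, Summable fun κ => ((θ κ : Circle) : ℂ).re * σ κ := by
    intro θ
    refine Summable.of_norm_bounded habs fun κ => ?_
    rw [Real.norm_eq_abs, abs_mul]
    have h1 : |((θ κ : Circle) : ℂ).re| ≤ 1 := by
      simpa [Circle.norm_coe] using Complex.abs_re_le_norm ((θ κ : Circle) : ℂ)
    nlinarith [abs_nonneg (σ κ)]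
  have hsIm : ∀ θ : AddChar H Circle, Summable fun κ => ((θ κ : Circle) : ℂ).im * σ κ := by
    intro θ
    refine Summable.of_norm_bounded habs fun κ => ?_
    rw [Real.norm_eq_abs, abs_mul]
    have h1 : |((θ κ : Circle) : ℂ).im| ≤ 1 := by
      simpa [Circle.norm_coe] using Complex.abs_im_le_norm ((θ κ : Circle) : ℂ)
    nlinarith [abs_nonneg (σ κ)]
  have hRe : ∀ θ : AddChar H Circle, ∑' κ, ((θ κ : Circle) : ℂ).re * σ κ = T := by
    intro θ
    have hv := hvanish (fun a => ((θ a : Circle) : ℂ))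
      (by show ((θ 0 : Circle) : ℂ) = 1; rw [θ.map_zero_eq_one, Circle.coe_one])
      (fun a b => by
        show ((θ (a + b) : Circle) : ℂ) = ((θ a : Circle) : ℂ) * ((θ b : Circle) : ℂ)
        rw [θ.map_add_eq_mul, Circle.coe_mul])
      (fun a => by exact Circle.norm_coe _)
    beta_reduce at hv
    have he : (fun κ => (1 - ((θ κ : Circle) : ℂ).re) * σ κ)
        = fun κ => σ κ - ((θ κ : Circle) : ℂ).re * σ κ := by funext κ; ring
    rw [he, Summable.tsum_sub hsum (hsRe θ)] at hv
    linarith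
  have hIm : ∀ θ : AddChar H Circle, ∑' κ, ((θ κ : Circle) : ℂ).im * σ κ = 0 := by
    intro θ
    have hodd : ∀ κ, ((θ (-κ) : Circle) : ℂ).im * σ (-κ)
        = -(((θ κ : Circle) : ℂ).im * σ κ) := by
      intro κ
      rw [hsym, AddChar.map_neg_eq_inv, Circle.coe_inv_eq_conj, Complex.conj_im]
      ring
    have h1 : ∑' κ, ((θ κ : Circle) : ℂ).im * σ κ
        = ∑' κ, ((θ (-κ) : Circle) : ℂ).im * σ (-κ) :=
      ((Equiv.neg H).tsum_eq fun κ => ((θ κ : Circle) : ℂ).im * σ κ).symm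
    have h2 : ∑' κ, ((θ (-κ) : Circle) : ℂ).im * σ (-κ)
        = -∑' κ, ((θ κ : Circle) : ℂ).im * σ κ := by
      simp_rw [hodd]; exact tsum_neg
    linarith
  have hB : ∀ θ : AddChar H Circle, HasSum (fun κ => ((θ κ : Circle) : ℂ) * (σ κ : ℂ)) (T : ℂ) := by
    intro θ
    refine (Complex.hasSum_iff _ _).2 ⟨?_, ?_⟩
    · have he : (fun κ => (((θ κ : Circle) : ℂ) * (σ κ : ℂ)).re)
          = fun κ => ((θ κ : Circle) : ℂ).re * σ κ := by
        funext κ; simp [Complex.mul_re]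
      rw [he, Complex.ofReal_re]
      exact hRe θ ▸ (hsRe θ).hasSum
    · have he : (fun κ => (((θ κ : Circle) : ℂ) * (σ κ : ℂ)).im)
          = fun κ => ((θ κ : Circle) : ℂ).im * σ κ := by
        funext κ; simp [Complex.mul_im]
      rw [he, Complex.ofReal_im]
      exact hIm θ ▸ (hsIm θ).hasSum
  set f : H → AddChar H Circle → ℂ :=
    fun κ θ => ((θ κ : Circle) : ℂ) * (σ κ : ℂ) * (starRingEnd ℂ) ((θ κ₀ : Circle) : ℂ) with hf
  have hnn : ∀ κ (θ : AddChar H Circle), ‖f κ θ‖₊ = ‖σ κ‖₊ := by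
    intro κ θ
    apply NNReal.coe_injective
    simp only [coe_nnnorm, hf, norm_mul, RCLike.norm_conj]
    simp [Circle.norm_coe]
  have hswap : ∫ θ, ∑' κ, f κ θ ∂(μH H) = ∑' κ, ∫ θ, f κ θ ∂(μH H) := by
    refine integral_tsum (fun κ => ?_) ?_
    · exact (((continuous_evalC κ).mul continuous_const).mul
        (continuous_star.comp (continuous_evalC κ₀))).aestronglyMeasurable
    · have : ∀ κ, ∫⁻ θ, ‖f κ θ‖ₑ ∂(μH H) = (‖σ κ‖₊ : ENNReal) * (μH H) Set.univ := by
        intro κ; simp_rw [enorm_eq_nnnorm, hnn]; exact lintegral_const _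
      simp_rw [this]
      rw [ENNReal.tsum_mul_right]
      exact ENNReal.mul_ne_top (ENNReal.tsum_coe_ne_top_iff_summable.2
        (NNReal.summable_coe.1 (by simpa using hsum.abs))) (measure_ne_top _ _)
  have hLHS : ∫ θ, ∑' κ, f κ θ ∂(μH H) = 0 := by
    have he : ∀ θ : AddChar H Circle,
        ∑' κ, f κ θ = (T : ℂ) * (starRingEnd ℂ) ((θ κ₀ : Circle) : ℂ) :=
      fun θ => ((hB θ).mul_right _).tsum_eq
    simp_rw [he]
    rw [integral_const_mul, integral_conj, J_eq_zero hκ₀, map_zero, mul_zero]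
  have hterm : ∀ κ, κ ≠ κ₀ → ∫ θ, f κ θ ∂(μH H) = 0 := by
    intro κ hne
    have he : ∀ θ : AddChar H Circle, f κ θ = ((θ (κ - κ₀) : Circle) : ℂ) * (σ κ : ℂ) := by
      intro θ
      have h1 : ((θ (κ - κ₀) : Circle) : ℂ)
          = ((θ κ : Circle) : ℂ) * (starRingEnd ℂ) ((θ κ₀ : Circle) : ℂ) := by
        rw [sub_eq_add_neg, θ.map_add_eq_mul, AddChar.map_neg_eq_inv, Circle.coe_mul,
          Circle.coe_inv_eq_conj]
      rw [h1, hf]; ring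
    simp_rw [he]
    rw [integral_mul_const, J_eq_zero (sub_ne_zero.2 hne), zero_mul]
  have htermκ₀ : ∫ θ, f κ₀ θ ∂(μH H) = ((μH H) Set.univ).toReal • (σ κ₀ : ℂ) := by
    have he : ∀ θ : AddChar H Circle, f κ₀ θ = (σ κ₀ : ℂ) := by
      intro θ
      have h1 : ((θ κ₀ : Circle) : ℂ) * (starRingEnd ℂ) ((θ κ₀ : Circle) : ℂ) = 1 := by
        rw [Complex.mul_conj]; simp
      calc f κ₀ θ = ((θ κ₀ : Circle) : ℂ) * (starRingEnd ℂ) ((θ κ₀ : Circle) : ℂ) * (σ κ₀ : ℂ) := by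
            rw [hf]; ring
        _ = (σ κ₀ : ℂ) := by rw [h1, one_mul]
    simp_rw [he]
    exact integral_const _
  have hfinal : ((μH H) Set.univ).toReal • (σ κ₀ : ℂ) = 0 := by
    rw [← htermκ₀, ← tsum_eq_single (L := SummationFilter.unconditional H) κ₀ hterm, ← hswap, hLHS]
  have hμ0 : ((μH H) Set.univ).toReal ≠ 0 := by
    refine ENNReal.toReal_ne_zero.2 ⟨?_, measure_ne_top _ _⟩
    exact (isOpen_univ.measure_pos (μH H) Set.univ_nonempty).ne'
  rcases smul_eq_zero.1 hfinal with h | h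
  · exact absurd h hμ0
  · exact_mod_cast h
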